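/- The leading coefficient (in m) of the determinant det_{1≤i,j≤n} B_{ij}(m), where B_{ij}(m) = (n+2+j-2i)_{n-j}·(i+m+1-j)_{j-1}·(m+(n+1-j)/2) for i ≠ s+1 and B_{s+1,j}(m) = (n+1+j-2s)_{n-j}·(s+m+1-j)_{j-1}, equals 2^{binom(n-1,2)} · (∏_{i=0}^{n-1} i!) · (2n-2s-1)!! · (2s-1)!! / ((n-s-1)! · s!), and the determinant has degree binom(n+1,2) - 1 as a polynomial in m. -/

import Mathlib

open Polynomial Finset

/-- The rising factorial `(x)_k = x(x+1)⋯(x+k-1)` in `ℚ`. -/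
def rfq (x : ℚ) (k : ℕ) : ℚ := ∏ i ∈ Finset.range k, (x + i)

/-- The rising factorial `(p)_k` of a polynomial. -/
noncomputable def rfP (p : Polynomial ℚ) (k : ℕ) : Polynomial ℚ :=
  ∏ i ∈ Finset.range k, (p + Polynomial.C (i : ℚ))

/-- The odd double factorial `(2r-1)!! = 1·3·5⋯(2r-1)` (with `(-1)!! = 1`). -/
def dfOdd (r : ℕ) : ℕ := ∏ i ∈ Finset.range r, (2 * i + 1)

/-- The superfactorial `∏_{i=0}^{n-1} i!`. -/
def sf (n : ℕ) : ℕ := ∏ i ∈ Finset.range n, Nat.factorial i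

lemma dfOdd_pos (r : ℕ) : 0 < dfOdd r := Finset.prod_pos (fun i _ => by omega)
lemma sf_pos (n : ℕ) : 0 < sf n := Finset.prod_pos (fun i _ => Nat.factorial_pos i)

lemma prod_Ioi_eq_prod_filter {M : Type*} [CommMonoid M] {n : ℕ} (f : Fin n → Fin n → M) :
    ∏ i : Fin n, ∏ j ∈ Finset.Ioi i, f i j
      = ∏ p ∈ Finset.univ.filter (fun p : Fin n × Fin n => p.1 < p.2), f p.1 p.2 := by
  rw [Finset.prod_filter, ← Finset.univ_product_univ, Finset.prod_product]
  refine Finset.prod_congr rfl fun i _ => ?_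
  rw [← Finset.prod_filter]
  congr 1
  ext j; simp

lemma prod_Ioi_rev {M : Type*} [CommMonoid M] {n : ℕ} (f : Fin n → Fin n → M) :
    ∏ i : Fin n, ∏ j ∈ Finset.Ioi i, f (Fin.rev j) (Fin.rev i)
      = ∏ i : Fin n, ∏ j ∈ Finset.Ioi i, f i j := by
  rw [prod_Ioi_eq_prod_filter, prod_Ioi_eq_prod_filter (f := f)]
  refine Finset.prod_nbij' (fun p => (p.2.rev, p.1.rev)) (fun p => (p.2.rev, p.1.rev))
    ?_ ?_ ?_ ?_ ?_
  · intro p hp; simp only [Finset.mem_filter, Finset.mem_univ, true_and] at *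
    exact Fin.rev_lt_rev.mpr hp
  · intro p hp; simp only [Finset.mem_filter, Finset.mem_univ, true_and] at *
    exact Fin.rev_lt_rev.mpr hp
  · intro p hp; simp [Fin.rev_rev]
  · intro p hp; simp [Fin.rev_rev]
  · intro p hp; rfl

lemma prod_Ioi_fin {M : Type*} [CommMonoid M] {n : ℕ} (i : Fin n) (f : ℕ → M) :
    ∏ j ∈ Finset.Ioi i, f j.1 = ∏ k ∈ Finset.range (n - 1 - i.1), f (i.1 + 1 + k) := by
  refine Finset.prod_bij' (fun j _ => j.1 - i.1 - 1)
    (fun k hk => (⟨i.1 + 1 + k, by simp at hk; omega⟩ : Fin n)) ?_ ?_ ?_ ?_ ?_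
  · intro j hj; simp at hj ⊢; omega
  · intro k hk; simp at hk ⊢; exact Fin.mk_lt_mk.mpr (by omega)
  · intro j hj; rw [Finset.mem_Ioi, Fin.lt_def] at hj; apply Fin.ext; dsimp only; omega
  · intro k hk; simp at hk; dsimp only; omega
  · intro j hj; rw [Finset.mem_Ioi, Fin.lt_def] at hj; congr 1; omega

lemma prod_Iio_fin {M : Type*} [CommMonoid M] {n : ℕ} (i : Fin n) (f : ℕ → M) :
    ∏ j ∈ Finset.Iio i, f j.1 = ∏ k ∈ Finset.range i.1, f k := by
  refine Finset.prod_bij' (fun j _ => j.1)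
    (fun k hk => (⟨k, by simp at hk; omega⟩ : Fin n)) ?_ ?_ ?_ ?_ ?_
  · intro j hj; simp at hj ⊢; omega
  · intro k hk; simp at hk ⊢; exact Fin.mk_lt_mk.mpr (by omega)
  · intro j hj; rfl
  · intro k hk; rfl
  · intro j hj; rfl

lemma prod_even1 (t : ℕ) : ∏ k ∈ Finset.range t, (2*(k:ℚ)+2) = 2^t * t.factorial := by
  induction t with
  | zero => simp
  | succ t ih => rw [Finset.prod_range_succ, ih, Nat.factorial_succ]; push_cast; ring

lemma prod_odd1 (t : ℕ) : ∏ k ∈ Finset.range t, (2*(k:ℚ)+3) = dfOdd (t+1) := by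
  have : (dfOdd (t+1) : ℚ) = ∏ i ∈ Finset.range (t+1), (2*(i:ℚ)+1) := by
    unfold dfOdd; push_cast; rfl
  rw [this, Finset.prod_range_succ']
  simp only [Nat.cast_zero, mul_zero, zero_add, mul_one]
  refine Finset.prod_congr rfl fun k _ => ?_
  push_cast; ring

lemma prod_odd2 (s : ℕ) : ∏ k ∈ Finset.range s, (2*(s:ℚ)-2*k-1) = dfOdd s := by
  have : (dfOdd s : ℚ) = ∏ i ∈ Finset.range s, (2*(i:ℚ)+1) := by
    unfold dfOdd; push_cast; rfl
  rw [this, ← Finset.prod_range_reflect (fun j => 2*(j:ℚ)+1) s]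
  refine Finset.prod_congr rfl fun k hk => ?_
  rw [Finset.mem_range] at hk
  have : ((s - 1 - k : ℕ) : ℚ) = (s:ℚ) - 1 - k := by
    rw [Nat.cast_sub (by omega), Nat.cast_sub (by omega)]; push_cast; ring
  rw [this]; ring

lemma prod_even2 (s : ℕ) : ∏ k ∈ Finset.range s, (2*(s:ℚ)-2*k) = 2^s * s.factorial := by
  rw [← prod_even1 s, ← Finset.prod_range_reflect (fun j => 2*(j:ℚ)+2) s]
  refine Finset.prod_congr rfl fun k hk => ?_
  rw [Finset.mem_range] at hk
  have : ((s - 1 - k : ℕ) : ℚ) = (s:ℚ) - 1 - k := by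
    rw [Nat.cast_sub (by omega), Nat.cast_sub (by omega)]; push_cast; ring
  rw [this]; ring

lemma sum_range_sub (n : ℕ) : ∑ i ∈ Finset.range n, (n - 1 - i) = Nat.choose n 2 := by
  rw [Finset.sum_range_reflect (fun j => j) n, Finset.sum_range_id, Nat.choose_two_right]

lemma prod_fact_reflect (n : ℕ) : ∏ i ∈ Finset.range n, Nat.factorial (n - 1 - i) = sf n := by
  rw [sf.eq_1, Finset.prod_range_reflect (fun j => Nat.factorial j) n]

def xn (s k : ℕ) : ℚ := if k = s then 1 - 2*(s:ℚ) else -2*(k:ℚ)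

lemma prodP (n s : ℕ) (hs : s < n) :
    ∏ i : Fin n, ∏ j ∈ Finset.Ioi i, (xn s i.1 - xn s j.1)
      = 2 ^ Nat.choose (n-1) 2 * (sf n : ℚ) * (dfOdd (n-s) : ℚ) * (dfOdd s : ℚ)
        / ((Nat.factorial (n-s-1) : ℚ) * (Nat.factorial s : ℚ)) := by
  set s' : Fin n := ⟨s, hs⟩ with hs'
  set r : Fin n → Fin n → ℚ :=
    fun i j => (xn s i.1 - xn s j.1) / (-2*(i.1:ℚ) + 2*(j.1:ℚ)) with hr
  -- denominators nonzero for i < j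
  have hden : ∀ i j : Fin n, i < j → (-2*(i.1:ℚ) + 2*(j.1:ℚ)) ≠ 0 := by
    intro i j hij
    have : (i.1:ℚ) < (j.1:ℚ) := by exact_mod_cast hij
    intro h; nlinarith
  -- split each factor
  have hsplit : ∏ i : Fin n, ∏ j ∈ Finset.Ioi i, (xn s i.1 - xn s j.1)
      = (∏ i : Fin n, ∏ j ∈ Finset.Ioi i, (-2*(i.1:ℚ) + 2*(j.1:ℚ)))
        * (∏ i : Fin n, ∏ j ∈ Finset.Ioi i, r i j) := by
    rw [← Finset.prod_mul_distrib]
    refine Finset.prod_congr rfl fun i _ => ?_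
    rw [← Finset.prod_mul_distrib]
    refine Finset.prod_congr rfl fun j hj => ?_
    rw [hr]
    rw [mul_div_cancel₀ _ (hden i j (Finset.mem_Ioi.mp hj))]
  -- the even Vandermonde
  have hinner : ∀ i : Fin n, ∏ j ∈ Finset.Ioi i, (-2*(i.1:ℚ) + 2*(j.1:ℚ))
      = 2^(n-1-i.1) * ((n-1-i.1).factorial : ℚ) := by
    intro i
    rw [prod_Ioi_fin i (fun m => -2*(i.1:ℚ) + 2*(m:ℚ))]
    rw [← prod_even1 (n-1-i.1)]
    refine Finset.prod_congr rfl fun k _ => ?_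
    push_cast; ring
  have hV : ∏ i : Fin n, ∏ j ∈ Finset.Ioi i, (-2*(i.1:ℚ) + 2*(j.1:ℚ))
      = 2^(Nat.choose n 2) * (sf n : ℚ) := by
    calc ∏ i : Fin n, ∏ j ∈ Finset.Ioi i, (-2*(i.1:ℚ) + 2*(j.1:ℚ))
        = ∏ i : Fin n, (2^(n-1-i.1) * ((n-1-i.1).factorial : ℚ)) :=
          Finset.prod_congr rfl fun i _ => hinner i
      _ = ∏ i ∈ Finset.range n, (2^(n-1-i) * ((n-1-i).factorial : ℚ)) :=
          Fin.prod_univ_eq_prod_range (fun m => 2^(n-1-m) * ((n-1-m).factorial : ℚ)) n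
      _ = (∏ i ∈ Finset.range n, (2:ℚ)^(n-1-i)) * ∏ i ∈ Finset.range n, ((n-1-i).factorial : ℚ) :=
          Finset.prod_mul_distrib
      _ = 2^(Nat.choose n 2) * (sf n : ℚ) := by
          rw [Finset.prod_pow_eq_pow_sum, sum_range_sub]
          congr 1
          rw [← Nat.cast_prod, prod_fact_reflect]
  -- the correction factors
  have hRs : ∏ j ∈ Finset.Ioi s', r s' j
      = (dfOdd (n-s) : ℚ) / (2^(n-1-s) * ((n-1-s).factorial : ℚ)) := by
    rw [show (∏ j ∈ Finset.Ioi s', r s' j)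
        = ∏ j ∈ Finset.Ioi s', (fun m => (xn s s - xn s m) / (-2*(s:ℚ) + 2*(m:ℚ))) j.1 from
      Finset.prod_congr rfl fun j _ => rfl]
    rw [prod_Ioi_fin s' (fun m => (xn s s - xn s m) / (-2*(s:ℚ) + 2*(m:ℚ)))]
    have : ∀ k ∈ Finset.range (n-1-s),
        (xn s s - xn s (s+1+k)) / (-2*(s:ℚ) + 2*((s+1+k : ℕ):ℚ))
          = (2*(k:ℚ)+3) / (2*(k:ℚ)+2) := by
      intro k _
      rw [xn, if_pos rfl, xn, if_neg (by omega)]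
      congr 1 <;> push_cast <;> ring
    rw [Finset.prod_congr rfl this, Finset.prod_div_distrib, prod_odd1, prod_even1,
      show n-1-s+1 = n-s by omega]
  have hRo : ∏ i ∈ Finset.univ.erase s', ∏ j ∈ Finset.Ioi i, r i j
      = (dfOdd s : ℚ) / (2^s * (s.factorial : ℚ)) := by
    have hone : ∀ i ∈ Finset.univ.erase s', ¬ i.1 < s → ∏ j ∈ Finset.Ioi i, r i j = 1 := by
      intro i hi hlt
      have his : i.1 ≠ s := fun h => (Finset.mem_erase.mp hi).1 (Fin.ext h)
      refine Finset.prod_eq_one fun j hj => ?_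
      have hij := Finset.mem_Ioi.mp hj
      have hjs : j.1 ≠ s := by have := (Fin.lt_def.mp hij); omega
      simp only [hr, xn, if_neg his, if_neg hjs]
      rw [show (-2*(i.1:ℚ) - (-2*(j.1:ℚ))) = (-2*(i.1:ℚ) + 2*(j.1:ℚ)) from by ring]
      exact div_self (hden i j hij)
    have hlt : ∀ i ∈ Finset.univ.erase s', i.1 < s → ∏ j ∈ Finset.Ioi i, r i j = r i s' := by
      intro i hi hilt
      refine Finset.prod_eq_single s' (fun b hb hbs => ?_) (fun hns => ?_)
      · have hib := Finset.mem_Ioi.mp hb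
        have hbs' : b.1 ≠ s := fun h => hbs (Fin.ext h)
        have his : i.1 ≠ s := by omega
        simp only [hr, xn, if_neg his, if_neg hbs']
        rw [show (-2*(i.1:ℚ) - (-2*(b.1:ℚ))) = (-2*(i.1:ℚ) + 2*(b.1:ℚ)) from by ring]
        exact div_self (hden i b hib)
      · exact absurd (Finset.mem_Ioi.mpr (Fin.lt_def.mpr hilt)) hns
    calc ∏ i ∈ Finset.univ.erase s', ∏ j ∈ Finset.Ioi i, r i j
        = ∏ i ∈ Finset.univ.erase s', (if i.1 < s then r i s' else 1) := by
          refine Finset.prod_congr rfl fun i hi => ?_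
          by_cases h : i.1 < s
          · rw [if_pos h, hlt i hi h]
          · rw [if_neg h, hone i hi h]
      _ = ∏ i ∈ (Finset.univ.erase s').filter (fun i => i.1 < s), r i s' :=
          (Finset.prod_filter _ _).symm
      _ = ∏ i ∈ Finset.Iio s', r i s' := by
          congr 1
          ext i
          constructor
          · intro h
            rw [Finset.mem_filter] at h
            exact Finset.mem_Iio.mpr (Fin.lt_def.mpr h.2)
          · intro h
            have h' : i.1 < s := Fin.lt_def.mp (Finset.mem_Iio.mp h)
            exact Finset.mem_filter.mpr
              ⟨Finset.mem_erase.mpr ⟨Fin.ne_of_val_ne (by show i.1 ≠ s; omega),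
                Finset.mem_univ i⟩, h'⟩
      _ = ∏ k ∈ Finset.range s,
            (fun m => (xn s m - xn s s) / (-2*(m:ℚ) + 2*(s:ℚ))) k := by
          rw [← prod_Iio_fin s' (fun m => (xn s m - xn s s) / (-2*(m:ℚ) + 2*(s:ℚ)))]
      _ = ∏ k ∈ Finset.range s, ((2*(s:ℚ)-2*k-1) / (2*(s:ℚ)-2*k)) := by
          refine Finset.prod_congr rfl fun k hk => ?_
          rw [Finset.mem_range] at hk
          simp only
          rw [xn, if_neg (by omega), xn, if_pos rfl]
          congr 1 <;> push_cast <;> ring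
      _ = (dfOdd s : ℚ) / (2^s * (s.factorial : ℚ)) := by
          rw [Finset.prod_div_distrib, prod_odd2, prod_even2]
  -- assemble
  have hprod : (∏ i : Fin n, ∏ j ∈ Finset.Ioi i, r i j)
      = (dfOdd (n-s) : ℚ) / (2^(n-1-s) * ((n-1-s).factorial : ℚ))
        * ((dfOdd s : ℚ) / (2^s * (s.factorial : ℚ))) := by
    rw [← Finset.mul_prod_erase Finset.univ (fun i => ∏ j ∈ Finset.Ioi i, r i j)
      (Finset.mem_univ s')]
    rw [hRs, hRo]
  have hc : Nat.choose n 2 = Nat.choose (n-1) 2 + (n-1-s) + s := by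
    obtain ⟨m, rfl⟩ : ∃ m, n = m + 1 := ⟨n-1, by omega⟩
    have h1 := Nat.choose_succ_succ m 1
    rw [Nat.choose_one_right, show Nat.succ 1 = 2 from rfl, Nat.succ_eq_add_one] at h1
    simp only [Nat.add_sub_cancel]
    omega
  have hF : ((n-1-s).factorial : ℚ) ≠ 0 := by
    exact_mod_cast (n-1-s).factorial_pos.ne'
  have hG : ((s.factorial : ℕ) : ℚ) ≠ 0 := by exact_mod_cast s.factorial_pos.ne'
  rw [hsplit, hV, hprod, hc, show n-s-1 = n-1-s by omega, pow_add, pow_add]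
  field_simp

noncomputable def pP (n k : ℕ) : ℚ[X] :=
  ∏ u ∈ Finset.range k, (X + C ((2*n-1-u : ℕ) : ℚ))

lemma pP_monic (n k : ℕ) : (pP n k).Monic :=
  monic_prod_of_monic _ _ (fun u _ => monic_X_add_C _)

lemma pP_natDegree (n k : ℕ) : (pP n k).natDegree = k := by
  rw [pP, natDegree_prod_of_monic _ _ (fun u _ => monic_X_add_C _),
    Finset.sum_congr rfl (fun x _ => natDegree_X_add_C _),
    Finset.sum_const, smul_eq_mul, mul_one, Finset.card_range]

lemma rfq_eq_eval (n j : ℕ) (hj : j < n) (z : ℚ) :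
    rfq (z + (n:ℚ) + j + 1) (n - (j+1)) = (pP n (n - 1 - j)).eval z := by
  rw [pP, eval_prod]
  simp only [eval_add, eval_X, eval_C]
  rw [rfq, show n - (j+1) = n-1-j from by omega,
    ← Finset.prod_range_reflect (fun u => z + ((2*n-1-u : ℕ):ℚ)) (n-1-j)]
  refine Finset.prod_congr rfl fun u hu => ?_
  rw [Finset.mem_range] at hu
  rw [show (2*n-1-(n-1-j-1-u) : ℕ) = n+j+1+u from by omega]
  push_cast; ring

lemma rfP_eq (a : ℚ) (k : ℕ) :
    rfP (X + C a) k = ∏ i ∈ Finset.range k, (X + C (a + i)) := by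
  rw [rfP]
  exact Finset.prod_congr rfl fun i _ => by rw [add_assoc, ← C_add]

lemma rfP_monic (a : ℚ) (k : ℕ) : (rfP (X + C a) k).Monic := by
  rw [rfP_eq]; exact monic_prod_of_monic _ _ (fun i _ => monic_X_add_C _)

lemma rfP_natDegree (a : ℚ) (k : ℕ) : (rfP (X + C a) k).natDegree = k := by
  rw [rfP_eq, natDegree_prod_of_monic _ _ (fun i _ => monic_X_add_C _),
    Finset.sum_congr rfl (fun x _ => natDegree_X_add_C _),
    Finset.sum_const, smul_eq_mul, mul_one, Finset.card_range]

noncomputable def qE (n s : ℕ) (i j : Fin n) : ℚ[X] :=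
  if i.1 = s then rfP (X + C ((s:ℚ) + 1 - ((j.1:ℚ)+1))) j.1
  else rfP (X + C (((i.1:ℚ)+1) + 1 - ((j.1:ℚ)+1))) j.1
    * (X + C (((n:ℚ)+1-((j.1:ℚ)+1))/2))

lemma qE_monic (n s : ℕ) (i j : Fin n) : (qE n s i j).Monic := by
  rw [qE]
  by_cases h : i.1 = s
  · rw [if_pos h]; exact rfP_monic _ _
  · rw [if_neg h]; exact (rfP_monic _ _).mul (monic_X_add_C _)

lemma qE_natDegree (n s : ℕ) (i j : Fin n) :
    (qE n s i j).natDegree = j.1 + (if i.1 = s then 0 else 1) := by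
  rw [qE]
  by_cases h : i.1 = s
  · rw [if_pos h, if_pos h, rfP_natDegree, add_zero]
  · rw [if_neg h, if_neg h, Monic.natDegree_mul (rfP_monic _ _) (monic_X_add_C _),
      rfP_natDegree, natDegree_X_add_C]

def Aq (n s : ℕ) (i j : Fin n) : ℚ := rfq (xn s i.1 + n + j.1 + 1) (n - (j.1+1))

lemma det_Aq (n s : ℕ) :
    (Matrix.of (Aq n s)).det
      = ∏ i : Fin n, ∏ j ∈ Finset.Ioi i, (xn s i.1 - xn s j.1) := by
  have h1 : Matrix.of (Aq n s)
      = (Matrix.of fun i j : Fin n => (pP n j.1).eval (xn s (Fin.rev i).1)).submatrix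
          Fin.revPerm Fin.revPerm := by
    ext i j
    simp only [Matrix.submatrix_apply, Matrix.of_apply, Fin.revPerm_apply, Fin.rev_rev]
    rw [Aq, rfq_eq_eval n j.1 j.2 (xn s i.1)]
    have hrv : (Fin.rev j).1 = n - 1 - j.1 := by rw [Fin.val_rev]; omega
    rw [hrv]
  rw [h1, Matrix.det_submatrix_equiv_self,
    ← Matrix.det_eval_matrixOfPolynomials_eq_det_vandermonde
      (fun i => xn s (Fin.rev i).1) (fun j => pP n j.1)
      (fun j => pP_natDegree n j.1) (fun j => pP_monic n j.1),
    Matrix.det_vandermonde,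
    ← prod_Ioi_rev (fun a b : Fin n => xn s a.1 - xn s b.1)]

lemma rfq_congr {x y : ℚ} (k : ℕ) (h : x = y) : rfq x k = rfq y k := by rw [h]


/-- The determinant `det B(m)` (entries
`B_{ij} = (n+2+j-2i)_{n-j}(i+m+1-j)_{j-1}(m+(n+1-j)/2)` for `i ≠ s+1`,
`B_{s+1,j} = (n+1+j-2s)_{n-j}(s+m+1-j)_{j-1}`), as a polynomial in `m`, has
degree `C(n+1,2) - 1` and leading coefficient
`2^{C(n-1,2)}·(∏_{i<n} i!)·(2n-2s-1)!!·(2s-1)!!/((n-s-1)!·s!)`. -/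
theorem lower_det_degree_leadingCoeff (n s : ℕ) (hn : 1 ≤ n) (hs : s < n) :
    (Matrix.det (Matrix.of fun i j : Fin n =>
        if i.1 = s then
          C (rfq ((n : ℚ) + 1 + ((j.1 : ℚ) + 1) - 2 * (s : ℚ)) (n - (j.1 + 1))) *
            rfP (X + C ((s : ℚ) + 1 - ((j.1 : ℚ) + 1))) j.1
        else
          C (rfq ((n : ℚ) + 2 + ((j.1 : ℚ) + 1) - 2 * ((i.1 : ℚ) + 1)) (n - (j.1 + 1))) *
            rfP (X + C (((i.1 : ℚ) + 1) + 1 - ((j.1 : ℚ) + 1))) j.1 *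
            (X + C (((n : ℚ) + 1 - ((j.1 : ℚ) + 1)) / 2)))).natDegree =
      Nat.choose (n + 1) 2 - 1 ∧
    (Matrix.det (Matrix.of fun i j : Fin n =>
        if i.1 = s then
          C (rfq ((n : ℚ) + 1 + ((j.1 : ℚ) + 1) - 2 * (s : ℚ)) (n - (j.1 + 1))) *
            rfP (X + C ((s : ℚ) + 1 - ((j.1 : ℚ) + 1))) j.1
        else
          C (rfq ((n : ℚ) + 2 + ((j.1 : ℚ) + 1) - 2 * ((i.1 : ℚ) + 1)) (n - (j.1 + 1))) *
            rfP (X + C (((i.1 : ℚ) + 1) + 1 - ((j.1 : ℚ) + 1))) j.1 *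
            (X + C (((n : ℚ) + 1 - ((j.1 : ℚ) + 1)) / 2)))).leadingCoeff =
      (2 : ℚ) ^ Nat.choose (n - 1) 2 * (sf n : ℚ) * (dfOdd (n - s) : ℚ) * (dfOdd s : ℚ) /
        ((Nat.factorial (n - s - 1) : ℚ) * (Nat.factorial s : ℚ)) := by
  have hmat : (Matrix.of fun i j : Fin n =>
        if i.1 = s then
          C (rfq ((n : ℚ) + 1 + ((j.1 : ℚ) + 1) - 2 * (s : ℚ)) (n - (j.1 + 1))) *
            rfP (X + C ((s : ℚ) + 1 - ((j.1 : ℚ) + 1))) j.1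
        else
          C (rfq ((n : ℚ) + 2 + ((j.1 : ℚ) + 1) - 2 * ((i.1 : ℚ) + 1)) (n - (j.1 + 1))) *
            rfP (X + C (((i.1 : ℚ) + 1) + 1 - ((j.1 : ℚ) + 1))) j.1 *
            (X + C (((n : ℚ) + 1 - ((j.1 : ℚ) + 1)) / 2)))
      = Matrix.of (fun i j : Fin n => C (Aq n s i j) * qE n s i j) := by
    ext i j
    simp only [Matrix.of_apply, qE, Aq]
    by_cases h : i.1 = s
    · rw [if_pos h, if_pos h, xn, if_pos h,
        rfq_congr (n - (j.1+1))
          (show (n : ℚ) + 1 + ((j.1 : ℚ) + 1) - 2 * (s : ℚ)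
            = (1 - 2*(s:ℚ)) + n + j.1 + 1 from by ring)]
    · rw [if_neg h, if_neg h, xn, if_neg h, mul_assoc,
        rfq_congr (n - (j.1+1))
          (show (n : ℚ) + 2 + ((j.1 : ℚ) + 1) - 2 * ((i.1 : ℚ) + 1)
            = (-2*(i.1:ℚ)) + n + j.1 + 1 from by ring)]
  rw [hmat]
  set Md := (Matrix.of (fun i j : Fin n => C (Aq n s i j) * qE n s i j)).det with hMd
  set D := Nat.choose n 2 + (n - 1) with hD
  -- degree of each permutation product
  have hQ : ∀ σ : Equiv.Perm (Fin n), (∏ i, qE n s (σ i) i).natDegree = D := by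
    intro σ
    rw [natDegree_prod_of_monic _ _ (fun i _ => qE_monic n s (σ i) i),
      Finset.sum_congr rfl (fun i _ => qE_natDegree n s (σ i) i),
      Finset.sum_add_distrib]
    have h1 : ∑ i : Fin n, i.1 = Nat.choose n 2 := by
      rw [Fin.sum_univ_eq_sum_range (fun i => i) n, Finset.sum_range_id,
        Nat.choose_two_right]
    have h2 : ∑ i : Fin n, (if (σ i).1 = s then 0 else 1) = n - 1 := by
      have hiff : ∀ i : Fin n, ((σ i).1 = s) ↔ (i = σ.symm ⟨s, hs⟩) := by
        intro i
        rw [← Fin.ext_iff (b := (⟨s, hs⟩ : Fin n))]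
        exact Equiv.apply_eq_iff_eq_symm_apply σ
      rw [Finset.sum_congr rfl (fun i _ => if_congr (hiff i) rfl rfl),
        ← Finset.add_sum_erase Finset.univ _ (Finset.mem_univ (σ.symm ⟨s, hs⟩)),
        if_pos rfl, zero_add,
        Finset.sum_congr rfl (fun i hi => if_neg (Finset.mem_erase.mp hi).1),
        Finset.sum_const, smul_eq_mul, mul_one,
        Finset.card_erase_of_mem (Finset.mem_univ _), Finset.card_univ,
        Fintype.card_fin]
    rw [h1, h2]
  -- expansion of the determinant
  have hexp : Md = ∑ σ : Equiv.Perm (Fin n),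
      C (((Equiv.Perm.sign σ : ℤ) : ℚ) * ∏ i, Aq n s (σ i) i) * ∏ i, qE n s (σ i) i := by
    rw [hMd, Matrix.det_apply']
    refine Finset.sum_congr rfl fun σ _ => ?_
    simp only [Matrix.of_apply]
    rw [Finset.prod_mul_distrib,
      ← map_prod C (fun x : Fin n => Aq n s (σ x) x) Finset.univ, C_mul, ← mul_assoc, C_eq_intCast]
  have hcoeffD : Md.coeff D = (Matrix.of (Aq n s)).det := by
    rw [hexp, finset_sum_coeff, Matrix.det_apply']
    refine Finset.sum_congr rfl fun σ _ => ?_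
    rw [coeff_C_mul, ← hQ σ,
      Monic.coeff_natDegree (monic_prod_of_monic _ _ (fun i _ => qE_monic n s (σ i) i)),
      mul_one]
    rfl
  have hdegle : Md.natDegree ≤ D := by
    rw [hexp]
    refine natDegree_sum_le_of_forall_le _ _ fun σ _ => ?_
    refine le_trans (natDegree_mul_le) ?_
    rw [natDegree_C, hQ σ, zero_add]
  -- value of det A
  have hval : (Matrix.of (Aq n s)).det
      = (2 : ℚ) ^ Nat.choose (n - 1) 2 * (sf n : ℚ) * (dfOdd (n - s) : ℚ) * (dfOdd s : ℚ) /
        ((Nat.factorial (n - s - 1) : ℚ) * (Nat.factorial s : ℚ)) :=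
    (det_Aq n s).trans (prodP n s hs)
  have hpos : (0:ℚ) < (2 : ℚ) ^ Nat.choose (n - 1) 2 * (sf n : ℚ) * (dfOdd (n - s) : ℚ)
      * (dfOdd s : ℚ) / ((Nat.factorial (n - s - 1) : ℚ) * (Nat.factorial s : ℚ)) := by
    apply div_pos
    · apply mul_pos
      apply mul_pos
      apply mul_pos
      · positivity
      · exact_mod_cast sf_pos n
      · exact_mod_cast dfOdd_pos (n - s)
      · exact_mod_cast dfOdd_pos s
    · apply mul_pos
      · exact_mod_cast (n-s-1).factorial_pos
      · exact_mod_cast s.factorial_pos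
  have hne : Md.coeff D ≠ 0 := by
    rw [hcoeffD, hval]
    exact hpos.ne'
  have hdeg : Md.natDegree = D := le_antisymm hdegle (le_natDegree_of_ne_zero hne)
  have hDval : D = Nat.choose (n + 1) 2 - 1 := by
    rw [hD]
    have h1 := Nat.choose_succ_succ n 1
    rw [Nat.choose_one_right, show Nat.succ 1 = 2 from rfl, Nat.succ_eq_add_one] at h1
    omega
  constructor
  · rw [hdeg, hDval]
  · rw [Polynomial.leadingCoeff, hdeg, hcoeffD, hval]
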